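/- Let E′ be the ideal of W generated by the six elements T₂ − 3·1, T₃ − 4·1, T₇ − 8·1, T₁₁ − 12·1, T₁₉ − 20·1, T₂₉ − 30·1, where 1 = (1, 1, 1), T₂ = (−1, −1+√2, √3), T₃ = (−2, √2, 1−√3), T₇ = (−4, 2−2√2, 2), T₁₁ = (2, 2−√2, −3+√3), T₁₉ = (−6, 2+√2, −1+3√3), T₂₉ = (2, 4√2, −6−2√3). Then the quotient ring W/E′ is isomorphic to ℤ/84ℤ. -/

import Mathlib

abbrev Rng : Type := ℤ × Zsqrtd 2 × Zsqrtd 3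

def Wset : Set Rng :=
  {p | p.1 ≡ p.2.1.re [ZMOD 2] ∧ p.1 ≡ p.2.2.re + p.2.2.im [ZMOD 2] ∧
       p.2.1.im ≡ p.2.2.im [ZMOD 2]}

private lemma modeq_iff (a b : ℤ) : a ≡ b [ZMOD 2] ↔ ((a : ZMod 2) = b) :=
  (ZMod.intCast_eq_intCast_iff a b 2).symm

def W : Subring Rng where
  carrier := Wset
  zero_mem' := by refine ⟨?_, ?_, ?_⟩ <;> decide
  one_mem' := by refine ⟨?_, ?_, ?_⟩ <;> decide
  add_mem' := by
    rintro a b ⟨h1, h2, h3⟩ ⟨g1, g2, g3⟩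
    refine ⟨h1.add g1, ?_, h3.add g3⟩
    simpa [add_add_add_comm] using h2.add g2
  neg_mem' := by
    rintro a ⟨h1, h2, h3⟩
    refine ⟨h1.neg, ?_, h3.neg⟩
    have := h2.neg
    simp only [Wset, Set.mem_setOf_eq, Prod.fst_neg, Prod.snd_neg, Zsqrtd.re_neg,
      Zsqrtd.im_neg, Int.modEq_iff_dvd] at this ⊢
    omega
  mul_mem' := by
    rintro a b ⟨h1, h2, h3⟩ ⟨g1, g2, g3⟩
    simp only [Wset, Set.mem_setOf_eq, Prod.fst_mul, Prod.snd_mul, Zsqrtd.re_mul,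
      Zsqrtd.im_mul, modeq_iff] at h1 h2 h3 g1 g2 g3 ⊢
    push_cast at h1 h2 h3 g1 g2 g3 ⊢
    have h0 : (2 : ZMod 2) = 0 := rfl
    refine ⟨?_, ?_, ?_⟩
    · rw [← h1, ← g1, h0]; ring
    · linear_combination (b.1 : ZMod 2) * h2 + ((a.2.2.re : ZMod 2) + a.2.2.im) * g2 -
        ((a.2.2.im : ZMod 2) * b.2.2.im) * h0
    · linear_combination (b.2.1.im : ZMod 2) * h2 - (b.2.1.im : ZMod 2) * h1
        + (b.2.1.re : ZMod 2) * h3 + ((a.2.2.re : ZMod 2) + a.2.2.im) * g3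
        + (a.2.2.im : ZMod 2) * g2 - (a.2.2.im : ZMod 2) * g1
        + ((a.2.2.im : ZMod 2) * b.2.2.im) * h0

lemma mem_W_iff (x : Rng) : x ∈ W ↔ x ∈ Wset := Iff.rfl

/-- `T₂ = (−1, −1+√2, √3)` as an element of `W`. -/
def T2w : W :=
  ⟨((-1 : ℤ), (⟨-1, 1⟩ : Zsqrtd 2), (⟨0, 1⟩ : Zsqrtd 3)), by
    rw [mem_W_iff]; refine ⟨?_, ?_, ?_⟩ <;> decide⟩

/-- `T₃ = (−2, √2, 1−√3)` as an element of `W`. -/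
def T3w : W :=
  ⟨((-2 : ℤ), (⟨0, 1⟩ : Zsqrtd 2), (⟨1, -1⟩ : Zsqrtd 3)), by
    rw [mem_W_iff]; refine ⟨?_, ?_, ?_⟩ <;> decide⟩

/-- `T₇ = (−4, 2−2√2, 2)` as an element of `W`. -/
def T7w : W :=
  ⟨((-4 : ℤ), (⟨2, -2⟩ : Zsqrtd 2), (⟨2, 0⟩ : Zsqrtd 3)), by
    rw [mem_W_iff]; refine ⟨?_, ?_, ?_⟩ <;> decide⟩

/-- `T₁₁ = (2, 2−√2, −3+√3)` as an element of `W`. -/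
def T11w : W :=
  ⟨((2 : ℤ), (⟨2, -1⟩ : Zsqrtd 2), (⟨-3, 1⟩ : Zsqrtd 3)), by
    rw [mem_W_iff]; refine ⟨?_, ?_, ?_⟩ <;> decide⟩

/-- `T₁₉ = (−6, 2+√2, −1+3√3)` as an element of `W`. -/
def T19w : W :=
  ⟨((-6 : ℤ), (⟨2, 1⟩ : Zsqrtd 2), (⟨-1, 3⟩ : Zsqrtd 3)), by
    rw [mem_W_iff]; refine ⟨?_, ?_, ?_⟩ <;> decide⟩

/-- `T₂₉ = (2, 4√2, −6−2√3)` as an element of `W`. -/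
def T29w : W :=
  ⟨((2 : ℤ), (⟨0, 4⟩ : Zsqrtd 2), (⟨-6, -2⟩ : Zsqrtd 3)), by
    rw [mem_W_iff]; refine ⟨?_, ?_, ?_⟩ <;> decide⟩

/-- The ideal `E′` of `W` generated by `T₂ − 3, T₃ − 4, T₇ − 8, T₁₁ − 12, T₁₉ − 20,
T₂₉ − 30` (i.e. by the elements `T_ℓ − (ℓ+1)·1`). -/
def Eis : Ideal W :=
  Ideal.span {T2w - 3, T3w - 4, T7w - 8, T11w - 12, T19w - 20, T29w - 30}

/-- The map `W → ℤ/84` -/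
def phi : W →+* ZMod 84 where
  toFun x := ((21*x.1.1 + 57*x.1.2.1.re + 18*x.1.2.1.im + 7*x.1.2.2.re + 63*x.1.2.2.im : ℤ) : ZMod 84)
  map_one' := by decide
  map_zero' := by decide
  map_add' x y := by
    simp only [AddMemClass.coe_add, Prod.fst_add, Prod.snd_add, Zsqrtd.re_add, Zsqrtd.im_add]
    push_cast
    ring
  map_mul' x y := by
    obtain ⟨s, hs0⟩ := x.2.1.dvd
    obtain ⟨t, ht0⟩ := x.2.2.2.dvd
    obtain ⟨u, hu0⟩ := x.2.2.1.dvd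
    obtain ⟨S, hS0⟩ := y.2.1.dvd
    obtain ⟨T, hT0⟩ := y.2.2.2.dvd
    obtain ⟨U, hU0⟩ := y.2.2.1.dvd
    have hs : x.1.2.1.re = x.1.1 + 2*s := by omega
    have ht : x.1.2.2.im = x.1.2.1.im + 2*t := by omega
    have hu : x.1.2.2.re = x.1.1 - x.1.2.2.im + 2*u := by omega
    have hS : y.1.2.1.re = y.1.1 + 2*S := by omega
    have hT : y.1.2.2.im = y.1.2.1.im + 2*T := by omega
    have hU : y.1.2.2.re = y.1.1 - y.1.2.2.im + 2*U := by omega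
    simp only [MulMemClass.coe_mul, Prod.fst_mul, Prod.snd_mul, Zsqrtd.re_mul, Zsqrtd.im_mul]
    rw [hs, hS, hu, hU, ht, hT]
    push_cast
    have h84 : (84 : ZMod 84) = 0 := by decide
    linear_combination (-(85*(y.1.1:ZMod 84)*(x.1.1:ZMod 84) + 74*(y.1.1:ZMod 84)*(x.1.2.1.im:ZMod 84) + 114*(y.1.1:ZMod 84)*(s:ZMod 84) + 112*(y.1.1:ZMod 84)*(t:ZMod 84) + 14*(y.1.1:ZMod 84)*(u:ZMod 84) + 74*(y.1.2.1.im:ZMod 84)*(x.1.1:ZMod 84) + 65*(y.1.2.1.im:ZMod 84)*(x.1.2.1.im:ZMod 84) + 100*(y.1.2.1.im:ZMod 84)*(s:ZMod 84) + 101*(y.1.2.1.im:ZMod 84)*(t:ZMod 84) + 11*(y.1.2.1.im:ZMod 84)*(u:ZMod 84) + 114*(S:ZMod 84)*(x.1.1:ZMod 84) + 100*(S:ZMod 84)*(x.1.2.1.im:ZMod 84) + 152*(S:ZMod 84)*(s:ZMod 84) + 152*(S:ZMod 84)*(t:ZMod 84) + 19*(S:ZMod 84)*(u:ZMod 84) +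 112*(T:ZMod 84)*(x.1.1:ZMod 84) + 101*(T:ZMod 84)*(x.1.2.1.im:ZMod 84) + 152*(T:ZMod 84)*(s:ZMod 84) + 154*(T:ZMod 84)*(t:ZMod 84) + 16*(T:ZMod 84)*(u:ZMod 84) + 14*(U:ZMod 84)*(x.1.1:ZMod 84) + 11*(U:ZMod 84)*(x.1.2.1.im:ZMod 84) + 19*(U:ZMod 84)*(s:ZMod 84) + 16*(U:ZMod 84)*(t:ZMod 84) + 2*(U:ZMod 84)*(u:ZMod 84))) * h84

lemma phi_apply (x : W) :
    phi x = ((21*x.1.1 + 57*x.1.2.1.re + 18*x.1.2.1.im + 7*x.1.2.2.re + 63*x.1.2.2.im : ℤ) : ZMod 84) :=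
  rfl

lemma phi_surj : Function.Surjective phi := by
  intro z
  obtain ⟨n, rfl⟩ := ZMod.intCast_surjective (n := 84) z
  refine ⟨(n : W), ?_⟩
  have h1 : ((n : W) : Rng) = (n : Rng) := by push_cast; rfl
  rw [phi_apply, h1]
  simp only [Prod.fst_intCast, Prod.snd_intCast, Zsqrtd.re_intCast, Zsqrtd.im_intCast]
  push_cast
  have h84 : (84 : ZMod 84) = 0 := by decide
  linear_combination (n : ZMod 84) * h84

/-- kernel lattice basis elements -/
def K1 : W := ⟨((-30 : ℤ), (⟨-28, 0⟩ : Zsqrtd 2), (⟨-30, 0⟩ : Zsqrtd 3)), by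
  rw [mem_W_iff]; refine ⟨?_, ?_, ?_⟩ <;> decide⟩
def K2 : W := ⟨((-4 : ℤ), (⟨-4, 1⟩ : Zsqrtd 2), (⟨-3, 1⟩ : Zsqrtd 3)), by
  rw [mem_W_iff]; refine ⟨?_, ?_, ?_⟩ <;> decide⟩
def K3 : W := ⟨((-14 : ℤ), (⟨-14, 0⟩ : Zsqrtd 2), (⟨-12, 0⟩ : Zsqrtd 3)), by
  rw [mem_W_iff]; refine ⟨?_, ?_, ?_⟩ <;> decide⟩
def K4 : W := ⟨((-42 : ℤ), (⟨-42, 0⟩ : Zsqrtd 2), (⟨-42, 2⟩ : Zsqrtd 3)), by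
  rw [mem_W_iff]; refine ⟨?_, ?_, ?_⟩ <;> decide⟩
def K5 : W := ⟨((84 : ℤ), (⟨84, 0⟩ : Zsqrtd 2), (⟨84, 0⟩ : Zsqrtd 3)), by
  rw [mem_W_iff]; refine ⟨?_, ?_, ?_⟩ <;> decide⟩

lemma g1_mem : T2w - 3 ∈ Eis := Ideal.subset_span (by simp)
lemma g2_mem : T3w - 4 ∈ Eis := Ideal.subset_span (by simp)
lemma g3_mem : T7w - 8 ∈ Eis := Ideal.subset_span (by simp)
lemma g5_mem : T19w - 20 ∈ Eis := Ideal.subset_span (by simp)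

def w1 : W := ⟨((7 : ℤ), (⟨7, 4⟩ : Zsqrtd 2), (⟨11, 4⟩ : Zsqrtd 3)), by
  rw [mem_W_iff]; refine ⟨?_, ?_, ?_⟩ <;> decide⟩
def w3 : W := ⟨((5 : ℤ), (⟨5, 2⟩ : Zsqrtd 2), (⟨7, 2⟩ : Zsqrtd 3)), by
  rw [mem_W_iff]; refine ⟨?_, ?_, ?_⟩ <;> decide⟩
def w4 : W := ⟨((13 : ℤ), (⟨13, 6⟩ : Zsqrtd 2), (⟨19, 6⟩ : Zsqrtd 3)), by
  rw [mem_W_iff]; refine ⟨?_, ?_, ?_⟩ <;> decide⟩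
def w5 : W := ⟨((-26 : ℤ), (⟨-26, -13⟩ : Zsqrtd 2), (⟨-39, -13⟩ : Zsqrtd 3)), by
  rw [mem_W_iff]; refine ⟨?_, ?_, ?_⟩ <;> decide⟩

lemma K1_mem : K1 ∈ Eis := by
  have h : K1 = w1 * (T2w - 3) + 2 * (T3w - 4) - 3 * (T7w - 8) + (T19w - 20) := by
    apply Subtype.ext; decide
  rw [h]
  exact Eis.add_mem (Eis.sub_mem (Eis.add_mem (Ideal.mul_mem_left _ _ g1_mem)
    (Ideal.mul_mem_left _ _ g2_mem)) (Ideal.mul_mem_left _ _ g3_mem)) g5_mem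

lemma K2_mem : K2 ∈ Eis := by
  have h : K2 = T2w - 3 := by apply Subtype.ext; decide
  rw [h]; exact g1_mem

lemma K3_mem : K3 ∈ Eis := by
  have h : K3 = w3 * (T2w - 3) + (T3w - 4) - (T7w - 8) := by
    apply Subtype.ext; decide
  rw [h]
  exact Eis.sub_mem (Eis.add_mem (Ideal.mul_mem_left _ _ g1_mem) g2_mem) g3_mem

lemma K4_mem : K4 ∈ Eis := by
  have h : K4 = w4 * (T2w - 3) + 2 * (T3w - 4) - 4 * (T7w - 8) + (T19w - 20) := by
    apply Subtype.ext; decide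
  rw [h]
  exact Eis.add_mem (Eis.sub_mem (Eis.add_mem (Ideal.mul_mem_left _ _ g1_mem)
    (Ideal.mul_mem_left _ _ g2_mem)) (Ideal.mul_mem_left _ _ g3_mem)) g5_mem

lemma K5_mem : K5 ∈ Eis := by
  have h : K5 = w5 * (T2w - 3) - 6 * (T3w - 4) + 9 * (T7w - 8) - 2 * (T19w - 20) := by
    apply Subtype.ext; decide
  rw [h]
  exact Eis.sub_mem (Eis.add_mem (Eis.sub_mem (Ideal.mul_mem_left _ _ g1_mem)
    (Ideal.mul_mem_left _ _ g2_mem)) (Ideal.mul_mem_left _ _ g3_mem))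
    (Ideal.mul_mem_left _ _ g5_mem)

lemma ker_le_Eis : RingHom.ker phi ≤ Eis := by
  intro x hx
  rw [RingHom.mem_ker, phi_apply] at hx
  obtain ⟨m, hm⟩ := (ZMod.intCast_zmod_eq_zero_iff_dvd _ 84).mp hx
  obtain ⟨s, hs⟩ := x.2.1.dvd
  obtain ⟨t, ht⟩ := x.2.2.2.dvd
  obtain ⟨u, hu⟩ := x.2.2.1.dvd
  have key : x = (s : W) * K1 + (x.1.2.1.im : W) * K2 + ((u - t - x.1.2.1.im : ℤ) : W) * K3
      + (t : W) * K4 + ((m - x.1.1 - s - x.1.2.1.im - t : ℤ) : W) * K5 := by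
    apply Subtype.ext
    simp only [Int.cast_id, MulMemClass.coe_mul, AddMemClass.coe_add, SubringClass.coe_intCast, K1, K2, K3, K4, K5,
      Prod.fst_mul, Prod.snd_mul, Prod.fst_add, Prod.snd_add, Prod.fst_intCast, Prod.snd_intCast,
      Zsqrtd.re_mul, Zsqrtd.im_mul, Zsqrtd.re_add, Zsqrtd.im_add, Zsqrtd.re_intCast, Zsqrtd.im_intCast,
      Prod.ext_iff, Zsqrtd.ext_iff]
    refine ⟨by omega, ⟨by omega, by omega⟩, by omega, by omega⟩
  rw [key]
  exact Eis.add_mem (Eis.add_mem (Eis.add_mem (Eis.add_mem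
    (Ideal.mul_mem_left _ _ K1_mem) (Ideal.mul_mem_left _ _ K2_mem))
    (Ideal.mul_mem_left _ _ K3_mem)) (Ideal.mul_mem_left _ _ K4_mem))
    (Ideal.mul_mem_left _ _ K5_mem)

lemma Eis_le_ker : Eis ≤ RingHom.ker phi := by
  rw [Eis, Ideal.span_le]
  rintro g hg
  simp only [Set.mem_insert_iff, Set.mem_singleton_iff] at hg
  rcases hg with rfl | rfl | rfl | rfl | rfl | rfl <;>
    · rw [SetLike.mem_coe, RingHom.mem_ker, phi_apply]
      decide

lemma Eis_eq_ker : Eis = RingHom.ker phi := le_antisymm Eis_le_ker ker_le_Eis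

/-- The quotient ring `W/E′` is isomorphic to `ℤ/84ℤ`. -/
theorem stmt11 : Nonempty ((W ⧸ Eis) ≃+* ZMod 84) := by
  exact ⟨(Ideal.quotEquivOfEq Eis_eq_ker).trans (RingHom.quotientKerEquivOfSurjective phi_surj)⟩
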